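/- (Shielding theorem for the transverse Ising chain) Consider N qubits with Hamiltonian H = -∑_{i=1}^{N-1} Jᵢ σᵢ^z σ_{i+1}^z - ∑_{i=1}^N hᵢ σᵢ^x, and suppose h_L = 0 for some 1 < L < N. Then the reduced state, over sites L,…,N, of the Gibbs state exp(-βH)/Tr(exp(-βH)) equals exp(-βH″)/Tr(exp(-βH″)), where H″ = -∑_{i=L}^{N-1}(Jᵢ σᵢ^z σ_{i+1}^z + h_{i+1} σ_{i+1}^x) acts only on sites L,…,N. In particular it is independent of h₁,…,h_{L-1} and J₁,…,J_{L-1}. -/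

import Mathlib

open Matrix Complex

noncomputable section

/-- Pauli X matrix. -/
def σx : Matrix (Fin 2) (Fin 2) ℂ := !![0, 1; 1, 0]
/-- Pauli Y matrix. -/
def σy : Matrix (Fin 2) (Fin 2) ℂ := !![0, -Complex.I; Complex.I, 0]
/-- Pauli Z matrix. -/
def σz : Matrix (Fin 2) (Fin 2) ℂ := !![1, 0; 0, -1]

/-- The one-site operator `P` acting on site `i` of a collection of qubits
indexed by `ι` (identity on all other sites). -/
def pauliAt {ι : Type} [Fintype ι] [DecidableEq ι] (i : ι)
    (P : Matrix (Fin 2) (Fin 2) ℂ) : Matrix (ι → Fin 2) (ι → Fin 2) ℂ :=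
  fun v w => if ∀ j, j ≠ i → v j = w j then P (v i) (w i) else 0

/-- The tensor product `⨂ i, η i` of one-qubit operators, as a matrix on the
full Hilbert space of the qubits indexed by `ι`. -/
def tensorPauli {ι : Type} [Fintype ι] [DecidableEq ι]
    (η : ι → Matrix (Fin 2) (Fin 2) ℂ) : Matrix (ι → Fin 2) (ι → Fin 2) ℂ :=
  fun v w => ∏ i, η i (v i) (w i)

/-- Partial trace over the sites satisfying `p`; the result is an operator on
the qubits at the remaining sites. -/
def traceOut {ι : Type} [Fintype ι] [DecidableEq ι] (p : ι → Prop) [DecidablePred p]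
    (M : Matrix (ι → Fin 2) (ι → Fin 2) ℂ) :
    Matrix ({i // ¬ p i} → Fin 2) ({i // ¬ p i} → Fin 2) ℂ :=
  fun v w => ∑ u : {i : ι // p i} → Fin 2,
    M (fun i => if h : p i then u ⟨i, h⟩ else v ⟨i, h⟩)
      (fun i => if h : p i then u ⟨i, h⟩ else w ⟨i, h⟩)

/-- The transverse-field Ising Hamiltonian
`H = -∑_{i=1}^{N-1} Jᵢ σᵢ^z σ_{i+1}^z - ∑_{i=1}^N hᵢ σᵢ^x` on a chain of
`N = K + 1` qubits. -/
def chainH (K : ℕ) (J : Fin K → ℝ) (h : Fin (K + 1) → ℝ) :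
    Matrix (Fin (K + 1) → Fin 2) (Fin (K + 1) → Fin 2) ℂ :=
  -∑ i : Fin K, (J i : ℂ) • (pauliAt i.castSucc σz * pauliAt i.succ σz)
    - ∑ i : Fin (K + 1), (h i : ℂ) • pauliAt i σx

/-- The Hamiltonian `H″ = -∑_{i=L}^{N-1} (Jᵢ σᵢ^z σ_{i+1}^z + h_{i+1} σ_{i+1}^x)`,
acting on the qubits at sites `L, …, N`. -/
def chainHright (K : ℕ) (J : Fin K → ℝ) (h : Fin (K + 1) → ℝ) (L : Fin (K + 1)) :
    Matrix ({i : Fin (K + 1) // ¬ i < L} → Fin 2)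
      ({i : Fin (K + 1) // ¬ i < L} → Fin 2) ℂ :=
  -∑ i : Fin K,
    if hi : L ≤ i.castSucc then
      (J i : ℂ) • (pauliAt (⟨i.castSucc, not_lt.mpr hi⟩ : {j : Fin (K + 1) // ¬ j < L}) σz *
          pauliAt (⟨i.succ, not_lt.mpr (hi.trans i.castSucc_le_succ)⟩ :
            {j : Fin (K + 1) // ¬ j < L}) σz)
        + (h i.succ : ℂ) • pauliAt (⟨i.succ, not_lt.mpr (hi.trans i.castSucc_le_succ)⟩ :
            {j : Fin (K + 1) // ¬ j < L}) σx
    else 0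


namespace Shielding

/-! ### Basic 2×2 facts -/

lemma σx_apply (a b : Fin 2) : σx a b = if a = b then 0 else 1 := by
  fin_cases a <;> fin_cases b <;> simp [σx]

def zsgn : Fin 2 → ℂ := fun a => if a = 0 then 1 else -1

lemma σz_apply (a b : Fin 2) : σz a b = if a = b then zsgn a else 0 := by
  fin_cases a <;> fin_cases b <;> simp [σz, zsgn]

lemma zsgn_add (a b : Fin 2) : zsgn (a + b) = zsgn a * zsgn b := by
  fin_cases a <;> fin_cases b <;> simp [zsgn]

lemma zsgn_ne_zero (a : Fin 2) : zsgn a ≠ 0 := by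
  fin_cases a <;> simp [zsgn]

lemma σz_mul_σz : σz * σz = 1 := by
  ext a b
  fin_cases a <;> fin_cases b <;>
    simp [σz, Matrix.mul_apply, Fin.sum_univ_two, Matrix.one_apply]

lemma σx_shift (a b c : Fin 2) : σx (a + c) (b + c) = σx a b := by
  fin_cases a <;> fin_cases b <;> fin_cases c <;> simp [σx]

lemma fin2_add_add (a b : Fin 2) : a + b + b = a := by
  fin_cases a <;> fin_cases b <;> rfl

lemma σz_conjT : σzᴴ = σz := by
  ext a b
  fin_cases a <;> fin_cases b <;> simp [σz, Matrix.conjTranspose_apply]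

lemma σx_conjT : σxᴴ = σx := by
  ext a b
  fin_cases a <;> fin_cases b <;> simp [σx, Matrix.conjTranspose_apply]

/-! ### tensorPauli and pauliAt algebra -/

variable {ι : Type} [Fintype ι] [DecidableEq ι]

lemma tensorPauli_mul (η θ : ι → Matrix (Fin 2) (Fin 2) ℂ) :
    tensorPauli η * tensorPauli θ = tensorPauli (fun i => η i * θ i) := by
  ext v w
  simp only [Matrix.mul_apply, tensorPauli]
  rw [Fintype.prod_sum (fun i (j : Fin 2) => η i (v i) j * θ i j (w i))]
  exact Finset.sum_congr rfl fun u _ => (Finset.prod_mul_distrib).symm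

lemma pauliAt_eq_tensorPauli (i : ι) (P : Matrix (Fin 2) (Fin 2) ℂ) :
    pauliAt i P = tensorPauli (fun j => if j = i then P else 1) := by
  ext v w
  simp only [pauliAt, tensorPauli]
  rw [← Finset.mul_prod_erase Finset.univ _ (Finset.mem_univ i)]
  have hhead : (if i = i then P else 1) (v i) (w i) = P (v i) (w i) := by rw [if_pos rfl]
  have htail : ∀ j ∈ Finset.univ.erase i,
      (if j = i then P else 1) (v j) (w j) = if v j = w j then 1 else 0 := by
    intro j hj
    rw [if_neg (Finset.mem_erase.mp hj).1, Matrix.one_apply]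
  rw [hhead, Finset.prod_congr rfl htail, Finset.prod_boole]
  have hiff : (∀ j ∈ Finset.univ.erase i, v j = w j) ↔ ∀ j, j ≠ i → v j = w j := by
    constructor
    · intro H j hj; exact H j (Finset.mem_erase.mpr ⟨hj, Finset.mem_univ j⟩)
    · intro H j hj; exact H j (Finset.mem_erase.mp hj).1
  simp only [hiff]
  by_cases hvw : ∀ j, j ≠ i → v j = w j
  · rw [if_pos hvw, if_pos hvw, mul_one]
  · rw [if_neg hvw, if_neg hvw, mul_zero]

lemma tensorPauli_one : tensorPauli (fun _ : ι => (1 : Matrix (Fin 2) (Fin 2) ℂ)) = 1 := by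
  ext v w
  simp only [tensorPauli, Matrix.one_apply, Finset.prod_boole]
  congr 1
  simp [funext_iff]

lemma pauliAt_mul (i : ι) (P Q : Matrix (Fin 2) (Fin 2) ℂ) :
    pauliAt i P * pauliAt i Q = pauliAt i (P * Q) := by
  rw [pauliAt_eq_tensorPauli, pauliAt_eq_tensorPauli, pauliAt_eq_tensorPauli,
    tensorPauli_mul]
  have : (fun j => (if j = i then P else 1) * if j = i then Q else 1)
      = fun j => if j = i then P * Q else (1 : Matrix (Fin 2) (Fin 2) ℂ) := by
    funext j
    by_cases hj : j = i <;> simp [hj]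
  rw [this]

lemma pauliAt_comm {i j : ι} (hij : i ≠ j) (P Q : Matrix (Fin 2) (Fin 2) ℂ) :
    pauliAt i P * pauliAt j Q = pauliAt j Q * pauliAt i P := by
  rw [pauliAt_eq_tensorPauli i, pauliAt_eq_tensorPauli j, tensorPauli_mul, tensorPauli_mul]
  have : (fun k => (if k = i then P else 1) * if k = j then Q else 1)
      = fun k => (if k = j then Q else 1) * if k = i then P else 1 := by
    funext k
    by_cases hki : k = i
    · subst hki
      simp [hij]
    · by_cases hkj : k = j
      · subst hkj
        simp [hki]
      · simp [hki, hkj]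
  rw [this]

lemma pauliAt_one (i : ι) : pauliAt i (1 : Matrix (Fin 2) (Fin 2) ℂ) = 1 := by
  rw [pauliAt_eq_tensorPauli]
  rw [show (fun j => if j = i then (1 : Matrix (Fin 2) (Fin 2) ℂ) else 1)
      = fun _ : ι => (1 : Matrix (Fin 2) (Fin 2) ℂ) from funext fun j => by simp]
  exact tensorPauli_one

lemma pauliAt_σz_diagonal (i : ι) :
    pauliAt i σz = Matrix.diagonal (fun v : ι → Fin 2 => zsgn (v i)) := by
  ext v w
  simp only [pauliAt, Matrix.diagonal_apply]
  by_cases hvw : v = w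
  · subst hvw
    rw [if_pos fun j _ => rfl, if_pos rfl, σz_apply, if_pos rfl]
  · rw [if_neg hvw]
    by_cases hcond : ∀ j, j ≠ i → v j = w j
    · rw [if_pos hcond, σz_apply, if_neg]
      intro hii
      exact hvw (funext fun j =>
        if hj : j = i then by rw [hj]; exact hii else hcond j hj)
    · rw [if_neg hcond]

lemma pauliAt_conjTranspose (i : ι) (P : Matrix (Fin 2) (Fin 2) ℂ) :
    (pauliAt i P)ᴴ = pauliAt i Pᴴ := by
  ext v w
  simp only [Matrix.conjTranspose_apply, pauliAt]
  have : (∀ j, j ≠ i → w j = v j) ↔ ∀ j, j ≠ i → v j = w j :=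
    ⟨fun H j hj => (H j hj).symm, fun H j hj => (H j hj).symm⟩
  simp only [this]
  by_cases hc : ∀ j, j ≠ i → v j = w j
  · rw [if_pos hc, if_pos hc]
  · rw [if_neg hc, if_neg hc, star_zero]

lemma commute_pauliAt {i j : ι} (hij : i ≠ j) (P Q : Matrix (Fin 2) (Fin 2) ℂ) :
    Commute (pauliAt i P) (pauliAt j Q) :=
  pauliAt_comm hij P Q

section Chain

open Kronecker

variable {K : ℕ}

/-- Left index set. -/
abbrev XI (L : Fin (K + 1)) := {i : Fin (K + 1) // i < L}
/-- Right index set. -/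
abbrev YI (L : Fin (K + 1)) := {i : Fin (K + 1) // ¬ i < L}
/-- Left configuration space. -/
abbrev Xs (L : Fin (K + 1)) := XI L → Fin 2
/-- Right configuration space. -/
abbrev Ys (L : Fin (K + 1)) := YI L → Fin 2

/-- The site `L` as an element of the right index set. -/
def LY (L : Fin (K + 1)) : YI L := ⟨L, lt_irrefl L⟩

/-- The controlled-flip change of variables. -/
def gE (L : Fin (K + 1)) : Xs L × Ys L ≃ (Fin (K + 1) → Fin 2) where
  toFun p i := if hi : i < L then p.1 ⟨i, hi⟩ + p.2 (LY L) else p.2 ⟨i, hi⟩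
  invFun v := (fun j => v j + v L, fun j => v j)
  left_inv p := by
    obtain ⟨x, y⟩ := p
    have h1 : (fun j : XI L =>
        (if hi : (j : Fin (K + 1)) < L then x ⟨j, hi⟩ + y (LY L) else y ⟨j, hi⟩)
          + (if hi : (L : Fin (K + 1)) < L then x ⟨L, hi⟩ + y (LY L) else y ⟨L, hi⟩)) = x := by
      funext j
      rw [dif_pos j.2, dif_neg (lt_irrefl L), Subtype.eta]
      exact fin2_add_add _ _
    have h2 : (fun j : YI L =>
        if hi : (j : Fin (K + 1)) < L then x ⟨j, hi⟩ + y (LY L) else y ⟨j, hi⟩) = y := by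
      funext j
      rw [dif_neg j.2, Subtype.eta]
    exact Prod.ext h1 h2
  right_inv v := by
    funext i
    by_cases hi : i < L
    · simp only [dif_pos hi]
      exact fin2_add_add _ _
    · simp only [dif_neg hi]

/-- `M ↦ M ⊗ 1` as an algebra homomorphism. -/
def liftL (L : Fin (K + 1)) :
    Matrix (Xs L) (Xs L) ℂ →ₐ[ℂ] Matrix (Xs L × Ys L) (Xs L × Ys L) ℂ where
  toFun M := M ⊗ₖ (1 : Matrix (Ys L) (Ys L) ℂ)
  map_one' := Matrix.one_kronecker_one
  map_mul' M N := by rw [← Matrix.mul_kronecker_mul, Matrix.one_mul]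
  map_zero' := Matrix.zero_kronecker _
  map_add' M N := Matrix.add_kronecker M N _
  commutes' r := by
    simp only [Algebra.algebraMap_eq_smul_one, Matrix.smul_kronecker,
      Matrix.one_kronecker_one]

/-- `N ↦ 1 ⊗ N` as an algebra homomorphism. -/
def liftR (L : Fin (K + 1)) :
    Matrix (Ys L) (Ys L) ℂ →ₐ[ℂ] Matrix (Xs L × Ys L) (Xs L × Ys L) ℂ where
  toFun N := (1 : Matrix (Xs L) (Xs L) ℂ) ⊗ₖ N
  map_one' := Matrix.one_kronecker_one
  map_mul' M N := by rw [← Matrix.mul_kronecker_mul, Matrix.one_mul]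
  map_zero' := Matrix.kronecker_zero _
  map_add' M N := Matrix.kronecker_add _ M N
  commutes' r := by
    simp only [Algebra.algebraMap_eq_smul_one, Matrix.kronecker_smul,
      Matrix.one_kronecker_one]

lemma liftL_mul_liftR (L : Fin (K + 1)) (M : Matrix (Xs L) (Xs L) ℂ)
    (N : Matrix (Ys L) (Ys L) ℂ) : liftL L M * liftR L N = M ⊗ₖ N := by
  show M ⊗ₖ 1 * (1 : Matrix (Xs L) (Xs L) ℂ) ⊗ₖ N = M ⊗ₖ N
  rw [← Matrix.mul_kronecker_mul, Matrix.mul_one, Matrix.one_mul]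

lemma liftR_mul_liftL (L : Fin (K + 1)) (M : Matrix (Xs L) (Xs L) ℂ)
    (N : Matrix (Ys L) (Ys L) ℂ) : liftR L N * liftL L M = M ⊗ₖ N := by
  show (1 : Matrix (Xs L) (Xs L) ℂ) ⊗ₖ N * M ⊗ₖ 1 = M ⊗ₖ N
  rw [← Matrix.mul_kronecker_mul, Matrix.mul_one, Matrix.one_mul]

/-- Conjugation of full-chain operators by the controlled flip,
written in the split basis. -/
def Φ (L : Fin (K + 1)) :
    Matrix (Fin (K + 1) → Fin 2) (Fin (K + 1) → Fin 2) ℂ ≃ₐ[ℂ]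
      Matrix (Xs L × Ys L) (Xs L × Ys L) ℂ :=
  Matrix.reindexAlgEquiv ℂ ℂ (gE L).symm

lemma Φ_apply (L : Fin (K + 1)) (M) (p q : Xs L × Ys L) :
    Φ L M p q = M (gE L p) (gE L q) := rfl

lemma fin2_cancel {a b c : Fin 2} (h : a + c = b + c) : a = b := by
  have := congrArg (· + c) h
  simpa [fin2_add_add] using this

lemma gE_apply_lt (L : Fin (K + 1)) (p : Xs L × Ys L) {i : Fin (K + 1)} (hi : i < L) :
    gE L p i = p.1 ⟨i, hi⟩ + p.2 (LY L) := dif_pos hi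

lemma gE_apply_not_lt (L : Fin (K + 1)) (p : Xs L × Ys L) {i : Fin (K + 1)} (hi : ¬ i < L) :
    gE L p i = p.2 ⟨i, hi⟩ := dif_neg hi

/-- The key combinatorial fact: agreement off site `i < L` in the original
variables corresponds to agreement off `i` on the left and full agreement on
the right, in the flipped variables. -/
lemma cond_iff_lt (L : Fin (K + 1)) (p q : Xs L × Ys L) {i : Fin (K + 1)} (hi : i < L) :
    (∀ j, j ≠ i → gE L p j = gE L q j) ↔
      ((∀ j : XI L, j ≠ ⟨i, hi⟩ → p.1 j = q.1 j) ∧ p.2 = q.2) := by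
  constructor
  · intro H
    have hy : p.2 = q.2 := by
      funext j
      have hj : ¬ (j : Fin (K + 1)) < L := j.2
      have hne : (j : Fin (K + 1)) ≠ i := fun e => hj (e ▸ hi)
      have := H j hne
      rw [gE_apply_not_lt L p hj, gE_apply_not_lt L q hj] at this
      exact this
    refine ⟨fun j hj => ?_, hy⟩
    have hne : (j : Fin (K + 1)) ≠ i := fun e => hj (Subtype.ext e)
    have := H j hne
    rw [gE_apply_lt L p j.2, gE_apply_lt L q j.2, hy] at this
    exact fin2_cancel this
  · rintro ⟨hx, hy⟩ j hj
    by_cases hjL : j < L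
    · rw [gE_apply_lt L p hjL, gE_apply_lt L q hjL, hy,
        hx ⟨j, hjL⟩ (fun e => hj (congrArg Subtype.val e))]
    · rw [gE_apply_not_lt L p hjL, gE_apply_not_lt L q hjL, hy]

lemma Φ_pauliAt_σz_lt (L : Fin (K + 1)) {i : Fin (K + 1)} (hi : i < L) :
    Φ L (pauliAt i σz) =
      (pauliAt (⟨i, hi⟩ : XI L) σz) ⊗ₖ pauliAt (LY L) σz := by
  ext p q
  rw [Φ_apply, Matrix.kronecker_apply, pauliAt_σz_diagonal, pauliAt_σz_diagonal,
    pauliAt_σz_diagonal]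
  by_cases hpq : p = q
  · subst hpq
    rw [Matrix.diagonal_apply_eq, Matrix.diagonal_apply_eq, Matrix.diagonal_apply_eq,
      gE_apply_lt L p hi, zsgn_add]
  · rw [Matrix.diagonal_apply_ne _ (fun e => hpq ((gE L).injective e))]
    by_cases h1 : p.1 = q.1
    · have h2 : p.2 ≠ q.2 := fun h2 => hpq (Prod.ext h1 h2)
      rw [Matrix.diagonal_apply_ne _ h2, mul_zero]
    · rw [Matrix.diagonal_apply_ne _ h1, zero_mul]

lemma Φ_pauliAt_σz_ge (L : Fin (K + 1)) {i : Fin (K + 1)} (hi : ¬ i < L) :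
    Φ L (pauliAt i σz) = (1 : Matrix (Xs L) (Xs L) ℂ) ⊗ₖ pauliAt (⟨i, hi⟩ : YI L) σz := by
  ext p q
  rw [Φ_apply, Matrix.kronecker_apply, pauliAt_σz_diagonal, pauliAt_σz_diagonal]
  by_cases hpq : p = q
  · subst hpq
    rw [Matrix.diagonal_apply_eq, Matrix.diagonal_apply_eq, Matrix.one_apply_eq, one_mul,
      gE_apply_not_lt L p hi]
  · rw [Matrix.diagonal_apply_ne _ (fun e => hpq ((gE L).injective e))]
    by_cases h1 : p.1 = q.1
    · have h2 : p.2 ≠ q.2 := fun h2 => hpq (Prod.ext h1 h2)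
      rw [Matrix.diagonal_apply_ne _ h2, mul_zero]
    · rw [Matrix.one_apply_ne h1, zero_mul]

lemma cond_iff_gt (L : Fin (K + 1)) (p q : Xs L × Ys L) {i : Fin (K + 1)} (hi : L < i) :
    (∀ j, j ≠ i → gE L p j = gE L q j) ↔
      ((∀ j : YI L, j ≠ ⟨i, not_lt.mpr hi.le⟩ → p.2 j = q.2 j) ∧ p.1 = q.1) := by
  constructor
  · intro H
    have hL : p.2 (LY L) = q.2 (LY L) := by
      have := H L (ne_of_lt hi)
      rw [gE_apply_not_lt L p (lt_irrefl L), gE_apply_not_lt L q (lt_irrefl L)] at this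
      exact this
    constructor
    · intro j hj
      have hne : (j : Fin (K + 1)) ≠ i := fun e => hj (Subtype.ext e)
      have := H j hne
      rw [gE_apply_not_lt L p j.2, gE_apply_not_lt L q j.2] at this
      exact this
    · funext j
      have hne : (j : Fin (K + 1)) ≠ i := ne_of_lt (j.2.trans hi)
      have := H j hne
      rw [gE_apply_lt L p j.2, gE_apply_lt L q j.2, hL] at this
      exact fin2_cancel this
  · rintro ⟨hy, hx⟩ j hj
    by_cases hjL : j < L
    · have hLy : p.2 (LY L) = q.2 (LY L) :=
        hy (LY L) (fun e => (ne_of_lt hi) (congrArg Subtype.val e))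
      rw [gE_apply_lt L p hjL, gE_apply_lt L q hjL, hx, hLy]
    · rw [gE_apply_not_lt L p hjL, gE_apply_not_lt L q hjL,
        hy ⟨j, hjL⟩ (fun e => hj (congrArg Subtype.val e))]

lemma Φ_pauliAt_σx_lt (L : Fin (K + 1)) {i : Fin (K + 1)} (hi : i < L) :
    Φ L (pauliAt i σx) =
      (pauliAt (⟨i, hi⟩ : XI L) σx) ⊗ₖ (1 : Matrix (Ys L) (Ys L) ℂ) := by
  ext p q
  rw [Φ_apply, Matrix.kronecker_apply]
  simp only [pauliAt]
  by_cases hc : (∀ j : XI L, j ≠ ⟨i, hi⟩ → p.1 j = q.1 j) ∧ p.2 = q.2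
  · rw [if_pos ((cond_iff_lt L p q hi).mpr hc), if_pos hc.1, hc.2, Matrix.one_apply_eq,
      mul_one, gE_apply_lt L p hi, gE_apply_lt L q hi, hc.2, σx_shift]
  · have hcond : ¬ ∀ j, j ≠ i → gE L p j = gE L q j :=
      fun hcond => hc ((cond_iff_lt L p q hi).mp hcond)
    rw [if_neg hcond]
    by_cases h2 : p.2 = q.2
    · have h1 : ¬ ∀ j : XI L, j ≠ ⟨i, hi⟩ → p.1 j = q.1 j := fun h1 => hc ⟨h1, h2⟩
      rw [if_neg h1, zero_mul]
    · rw [Matrix.one_apply_ne h2, mul_zero]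

lemma Φ_pauliAt_σx_gt (L : Fin (K + 1)) {i : Fin (K + 1)} (hi : L < i) :
    Φ L (pauliAt i σx) =
      (1 : Matrix (Xs L) (Xs L) ℂ) ⊗ₖ pauliAt (⟨i, not_lt.mpr hi.le⟩ : YI L) σx := by
  ext p q
  rw [Φ_apply, Matrix.kronecker_apply]
  simp only [pauliAt]
  by_cases hc : (∀ j : YI L, j ≠ ⟨i, not_lt.mpr hi.le⟩ → p.2 j = q.2 j) ∧ p.1 = q.1
  · rw [if_pos ((cond_iff_gt L p q hi).mpr hc), if_pos hc.1, hc.2, Matrix.one_apply_eq,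
      one_mul, gE_apply_not_lt L p (not_lt.mpr hi.le), gE_apply_not_lt L q (not_lt.mpr hi.le)]
  · have hcond : ¬ ∀ j, j ≠ i → gE L p j = gE L q j :=
      fun hcond => hc ((cond_iff_gt L p q hi).mp hcond)
    rw [if_neg hcond]
    by_cases h1 : p.1 = q.1
    · have h2 : ¬ ∀ j : YI L, j ≠ ⟨i, not_lt.mpr hi.le⟩ → p.2 j = q.2 j :=
        fun h2 => hc ⟨h2, h1⟩
      rw [if_neg h2, mul_zero]
    · rw [Matrix.one_apply_ne h1, zero_mul]

lemma liftL_apply (L : Fin (K + 1)) (M : Matrix (Xs L) (Xs L) ℂ) :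
    liftL L M = M ⊗ₖ (1 : Matrix (Ys L) (Ys L) ℂ) := rfl

lemma liftR_apply (L : Fin (K + 1)) (N : Matrix (Ys L) (Ys L) ℂ) :
    liftR L N = (1 : Matrix (Xs L) (Xs L) ℂ) ⊗ₖ N := rfl

lemma liftLR_mul (L : Fin (K + 1)) (a c : Matrix (Xs L) (Xs L) ℂ)
    (b d : Matrix (Ys L) (Ys L) ℂ) :
    (liftL L a * liftR L b) * (liftL L c * liftR L d) = liftL L (a * c) * liftR L (b * d) := by
  rw [liftL_mul_liftR, liftL_mul_liftR, liftL_mul_liftR, ← Matrix.mul_kronecker_mul]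

lemma Φ_σz_lt' (L : Fin (K + 1)) {i : Fin (K + 1)} (hi : i < L) :
    Φ L (pauliAt i σz) =
      liftL L (pauliAt (⟨i, hi⟩ : XI L) σz) * liftR L (pauliAt (LY L) σz) :=
  (Φ_pauliAt_σz_lt L hi).trans (liftL_mul_liftR L _ _).symm

lemma Φ_σz_ge' (L : Fin (K + 1)) {i : Fin (K + 1)} (hi : ¬ i < L) :
    Φ L (pauliAt i σz) = liftR L (pauliAt (⟨i, hi⟩ : YI L) σz) :=
  Φ_pauliAt_σz_ge L hi

lemma Φ_σx_lt' (L : Fin (K + 1)) {i : Fin (K + 1)} (hi : i < L) :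
    Φ L (pauliAt i σx) = liftL L (pauliAt (⟨i, hi⟩ : XI L) σx) :=
  Φ_pauliAt_σx_lt L hi

lemma Φ_σx_gt' (L : Fin (K + 1)) {i : Fin (K + 1)} (hi : L < i) :
    Φ L (pauliAt i σx) = liftR L (pauliAt (⟨i, not_lt.mpr hi.le⟩ : YI L) σx) :=
  Φ_pauliAt_σx_gt L hi

variable (J : Fin K → ℝ) (h : Fin (K + 1) → ℝ) (L : Fin (K + 1))

/-- The `σᶻσᶻ` (plus boundary `σᶻ`) part of the effective left Hamiltonian. -/
def S1 (i : Fin K) : Matrix (Xs L) (Xs L) ℂ :=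
  if hs : (i.succ : Fin (K + 1)) < L then
    (J i : ℂ) • (pauliAt (⟨i.castSucc, (i.castSucc_lt_succ).trans hs⟩ : XI L) σz *
      pauliAt (⟨i.succ, hs⟩ : XI L) σz)
  else if hc : (i.castSucc : Fin (K + 1)) < L then
    (J i : ℂ) • pauliAt (⟨i.castSucc, hc⟩ : XI L) σz
  else 0

/-- The transverse-field part of the effective left Hamiltonian. -/
def S2 (j : Fin (K + 1)) : Matrix (Xs L) (Xs L) ℂ :=
  if hj : j < L then (h j : ℂ) • pauliAt (⟨j, hj⟩ : XI L) σx else 0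

/-- The effective left Hamiltonian. -/
def leftH : Matrix (Xs L) (Xs L) ℂ :=
  -∑ i : Fin K, S1 J L i - ∑ j : Fin (K + 1), S2 h L j

/-- The `σᶻσᶻ` part of the right Hamiltonian. -/
def JR (i : Fin K) : Matrix (Ys L) (Ys L) ℂ :=
  if hi : L ≤ i.castSucc then
    (J i : ℂ) • (pauliAt (⟨i.castSucc, not_lt.mpr hi⟩ : YI L) σz *
      pauliAt (⟨i.succ, not_lt.mpr (hi.trans i.castSucc_le_succ)⟩ : YI L) σz)
  else 0

/-- The transverse-field part of the right Hamiltonian. -/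
def hR (i : Fin K) : Matrix (Ys L) (Ys L) ℂ :=
  if hi : L ≤ i.castSucc then
    (h i.succ : ℂ) • pauliAt (⟨i.succ, not_lt.mpr (hi.trans i.castSucc_le_succ)⟩ : YI L) σx
  else 0

lemma chainHright_eq : chainHright K J h L = -∑ i : Fin K, (JR J L i + hR h L i) := by
  unfold chainHright JR hR
  congr 1
  refine Finset.sum_congr rfl fun i _ => ?_
  by_cases hi : L ≤ i.castSucc
  · rw [dif_pos hi, dif_pos hi, dif_pos hi]
  · rw [dif_neg hi, dif_neg hi, dif_neg hi, add_zero]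

lemma succ_eq_L {i : Fin K} (hc : (i.castSucc : Fin (K + 1)) < L)
    (hs : ¬ (i.succ : Fin (K + 1)) < L) : (i.succ : Fin (K + 1)) = L := by
  refine le_antisymm ?_ (not_lt.mp hs)
  rw [Fin.le_def, Fin.val_succ]
  rw [Fin.lt_def] at hc
  exact hc

lemma le_castSucc_iff_lt_succ {i : Fin K} :
    L ≤ i.castSucc ↔ L < i.succ := by
  rw [Fin.le_def, Fin.lt_def, Fin.val_succ, Fin.coe_castSucc]
  omega

lemma Φ_ZZ (i : Fin K) :
    Φ L ((J i : ℂ) • (pauliAt (i.castSucc : Fin (K + 1)) σz *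
        pauliAt (i.succ : Fin (K + 1)) σz)) =
      liftL L (S1 J L i) + liftR L (JR J L i) := by
  rw [_root_.map_smul, _root_.map_mul]
  by_cases hs : (i.succ : Fin (K + 1)) < L
  · have hc : (i.castSucc : Fin (K + 1)) < L := (i.castSucc_lt_succ).trans hs
    rw [Φ_σz_lt' L hc, Φ_σz_lt' L hs, liftLR_mul, pauliAt_mul, σz_mul_σz, pauliAt_one,
      _root_.map_one, mul_one, ← _root_.map_smul, S1, dif_pos hs, JR,
      dif_neg (not_le.mpr ((i.castSucc_lt_succ).trans hs)), _root_.map_zero, add_zero]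
  · by_cases hc : (i.castSucc : Fin (K + 1)) < L
    · have hsL : (⟨i.succ, hs⟩ : YI L) = LY L := Subtype.ext (succ_eq_L L hc hs)
      rw [Φ_σz_lt' L hc, Φ_σz_ge' L hs, hsL]
      have hsq : liftL L (pauliAt (⟨i.castSucc, hc⟩ : XI L) σz) * liftR L (pauliAt (LY L) σz) *
          liftR L (pauliAt (LY L) σz) = liftL L (pauliAt (⟨i.castSucc, hc⟩ : XI L) σz) := by
        rw [mul_assoc, ← _root_.map_mul, pauliAt_mul, σz_mul_σz, pauliAt_one,
          _root_.map_one, mul_one]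
      rw [hsq, ← _root_.map_smul, S1, dif_neg hs, dif_pos hc, JR,
        dif_neg (not_le.mpr hc), _root_.map_zero, add_zero]
    · have hgec : L ≤ i.castSucc := not_lt.mp hc
      rw [Φ_σz_ge' L hc, Φ_σz_ge' L hs, ← _root_.map_mul, ← _root_.map_smul, S1, dif_neg hs, dif_neg hc,
        _root_.map_zero, zero_add, JR, dif_pos hgec]

lemma Φ_field (hL0 : 0 < L) (hfield : h L = 0) :
    ∑ j : Fin (K + 1), Φ L ((h j : ℂ) • pauliAt j σx) =
      ∑ j : Fin (K + 1), liftL L (S2 h L j) + ∑ i : Fin K, liftR L (hR h L i) := by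
  have key : ∀ j : Fin (K + 1),
      Φ L ((h j : ℂ) • pauliAt j σx) - liftL L (S2 h L j) =
        (if hj : L < j then
          (h j : ℂ) • liftR L (pauliAt (⟨j, not_lt.mpr hj.le⟩ : YI L) σx) else 0) := by
    intro j
    rcases lt_trichotomy j L with hj | hj | hj
    · rw [_root_.map_smul, Φ_σx_lt' L hj, S2, dif_pos hj, _root_.map_smul, sub_self, dif_neg (not_lt.mpr hj.le)]
    · subst hj
      rw [hfield, Complex.ofReal_zero, zero_smul, _root_.map_zero, zero_sub, S2,
        dif_neg (lt_irrefl j), _root_.map_zero, neg_zero, dif_neg (lt_irrefl j)]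
    · rw [_root_.map_smul, Φ_σx_gt' L hj, S2, dif_neg (not_lt.mpr hj.le), _root_.map_zero, sub_zero,
        dif_pos hj]
  have hsum : ∑ j : Fin (K + 1),
      (Φ L ((h j : ℂ) • pauliAt j σx) - liftL L (S2 h L j)) =
        ∑ i : Fin K, liftR L (hR h L i) := by
    rw [Finset.sum_congr rfl fun j _ => key j, Fin.sum_univ_succ,
      dif_neg (not_lt.mpr (Fin.zero_le L))]
    rw [zero_add]
    refine Finset.sum_congr rfl fun i _ => ?_
    by_cases hi : L < i.succ
    · rw [dif_pos hi, hR, dif_pos ((le_castSucc_iff_lt_succ L).mpr hi), _root_.map_smul]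
    · rw [dif_neg hi, hR, dif_neg (fun hle => hi ((le_castSucc_iff_lt_succ L).mp hle)),
        _root_.map_zero]
  rw [← hsum, Finset.sum_sub_distrib]
  abel

lemma Φ_chainH (hL0 : 0 < L) (hfield : h L = 0) :
    Φ L (chainH K J h) = liftL L (leftH J h L) + liftR L (chainHright K J h L) := by
  unfold chainH
  rw [map_sub, map_neg, map_sum, map_sum,
    Finset.sum_congr rfl fun i _ => Φ_ZZ J L i, Φ_field h L hL0 hfield,
    leftH, chainHright_eq J h L]
  simp only [map_add, map_neg, map_sub, map_sum, Finset.sum_add_distrib]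
  abel

lemma algEquiv_exp {m n : Type} [Fintype m] [DecidableEq m] [Fintype n] [DecidableEq n]
    (f : Matrix m m ℂ ≃ₐ[ℂ] Matrix n n ℂ) (M : Matrix m m ℂ) :
    f (NormedSpace.exp M) = NormedSpace.exp (f M) := by
  letI : SeminormedRing (Matrix m m ℂ) := Matrix.linftyOpSemiNormedRing
  letI : NormedRing (Matrix m m ℂ) := Matrix.linftyOpNormedRing
  letI : NormedAlgebra ℂ (Matrix m m ℂ) := Matrix.linftyOpNormedAlgebra
  letI : NormedAlgebra ℚ (Matrix m m ℂ) := NormedAlgebra.restrictScalars ℚ ℂ _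
  letI : SeminormedRing (Matrix n n ℂ) := Matrix.linftyOpSemiNormedRing
  letI : NormedRing (Matrix n n ℂ) := Matrix.linftyOpNormedRing
  letI : NormedAlgebra ℂ (Matrix n n ℂ) := Matrix.linftyOpNormedAlgebra
  letI : NormedAlgebra ℚ (Matrix n n ℂ) := NormedAlgebra.restrictScalars ℚ ℂ _
  exact NormedSpace.map_exp f
    (LinearMap.continuous_of_finiteDimensional f.toLinearEquiv.toLinearMap) M

lemma algHom_exp {m n : Type} [Fintype m] [DecidableEq m] [Fintype n] [DecidableEq n]
    (f : Matrix m m ℂ →ₐ[ℂ] Matrix n n ℂ) (M : Matrix m m ℂ) :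
    f (NormedSpace.exp M) = NormedSpace.exp (f M) := by
  letI : SeminormedRing (Matrix m m ℂ) := Matrix.linftyOpSemiNormedRing
  letI : NormedRing (Matrix m m ℂ) := Matrix.linftyOpNormedRing
  letI : NormedAlgebra ℂ (Matrix m m ℂ) := Matrix.linftyOpNormedAlgebra
  letI : NormedAlgebra ℚ (Matrix m m ℂ) := NormedAlgebra.restrictScalars ℚ ℂ _
  letI : SeminormedRing (Matrix n n ℂ) := Matrix.linftyOpSemiNormedRing
  letI : NormedRing (Matrix n n ℂ) := Matrix.linftyOpNormedRing
  letI : NormedAlgebra ℂ (Matrix n n ℂ) := Matrix.linftyOpNormedAlgebra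
  letI : NormedAlgebra ℚ (Matrix n n ℂ) := NormedAlgebra.restrictScalars ℚ ℂ _
  exact NormedSpace.map_exp f
    (LinearMap.continuous_of_finiteDimensional f.toLinearMap) M

lemma exp_factor (β : ℝ) (hL0 : 0 < L) (hfield : h L = 0) :
    NormedSpace.exp ((-(β : ℂ)) • chainH K J h) =
      (Φ L).symm (NormedSpace.exp ((-(β : ℂ)) • leftH J h L) ⊗ₖ
        NormedSpace.exp ((-(β : ℂ)) • chainHright K J h L)) := by
  have h1 : Φ L ((-(β : ℂ)) • chainH K J h)
      = liftL L ((-(β : ℂ)) • leftH J h L) + liftR L ((-(β : ℂ)) • chainHright K J h L) := by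
    rw [_root_.map_smul, Φ_chainH J h L hL0 hfield, smul_add, _root_.map_smul, _root_.map_smul]
  have hcomm : Commute (liftL L ((-(β : ℂ)) • leftH J h L))
      (liftR L ((-(β : ℂ)) • chainHright K J h L)) := by
    unfold Commute SemiconjBy
    rw [liftL_mul_liftR, liftR_mul_liftL]
  have h2 := algEquiv_exp (Φ L) ((-(β : ℂ)) • chainH K J h)
  rw [h1, Matrix.exp_add_of_commute _ _ hcomm, ← algHom_exp (liftL L),
    ← algHom_exp (liftR L), liftL_mul_liftR] at h2
  rw [← h2, AlgEquiv.symm_apply_apply]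

lemma commute_pauliAt_pauliAt {i j : ι'} {P Q : Matrix (Fin 2) (Fin 2) ℂ}
    [Fintype ι'] [DecidableEq ι'] (hPQ : P * Q = Q * P) :
    Commute (pauliAt i P) (pauliAt j Q) := by
  unfold Commute SemiconjBy
  by_cases hij : i = j
  · subst hij
    rw [pauliAt_mul, pauliAt_mul, hPQ]
  · exact pauliAt_comm hij P Q

lemma sector_vanish (β : ℝ) (hLtop : L < Fin.last K) (v w : Ys L)
    (hvw : v (LY L) ≠ w (LY L)) :
    NormedSpace.exp ((-(β : ℂ)) • chainHright K J h L) v w = 0 := by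
  set D : Matrix (Ys L) (Ys L) ℂ := pauliAt (LY L) σz with hD
  have hD2 : D * D = 1 := by rw [hD, pauliAt_mul, σz_mul_σz, pauliAt_one]
  have hcomm : Commute ((-(β : ℂ)) • chainHright K J h L) D := by
    rw [chainHright_eq]
    refine Commute.smul_left ?_ _
    refine Commute.neg_left ?_
    refine Commute.sum_left _ _ _ fun i _ => ?_
    refine Commute.add_left ?_ ?_
    · unfold JR
      by_cases hi : L ≤ i.castSucc
      · rw [dif_pos hi]
        refine Commute.smul_left ?_ _
        exact Commute.mul_left (commute_pauliAt_pauliAt rfl) (commute_pauliAt_pauliAt rfl)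
      · rw [dif_neg hi]; exact Commute.zero_left _
    · unfold hR
      by_cases hi : L ≤ i.castSucc
      · rw [dif_pos hi]
        refine Commute.smul_left ?_ _
        have hne : (⟨i.succ, not_lt.mpr (hi.trans i.castSucc_le_succ)⟩ : YI L) ≠ LY L :=
          fun e => absurd (congrArg Subtype.val e)
            (ne_of_gt ((le_castSucc_iff_lt_succ L).mp hi))
        exact pauliAt_comm hne σx σz
      · rw [dif_neg hi]; exact Commute.zero_left _
  set M := (-(β : ℂ)) • chainHright K J h L with hM
  set DU : (Matrix (Ys L) (Ys L) ℂ)ˣ := ⟨D, D, hD2, hD2⟩ with hDU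
  have hDMD : D * M * D = M := by
    rw [← hcomm.eq, mul_assoc, hD2, mul_one]
  have hconj := Matrix.exp_units_conj DU M
  have hDUinv : ((DU⁻¹ : (Matrix (Ys L) (Ys L) ℂ)ˣ) : Matrix (Ys L) (Ys L) ℂ) = D := rfl
  rw [hDUinv] at hconj
  have hDUcoe : ((DU : (Matrix (Ys L) (Ys L) ℂ)ˣ) : Matrix (Ys L) (Ys L) ℂ) = D := rfl
  rw [hDUcoe, hDMD] at hconj
  have hq' := congrFun (congrFun hconj v) w
  rw [hD, pauliAt_σz_diagonal, Matrix.mul_diagonal, Matrix.diagonal_mul] at hq'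
  have hzz : zsgn (v (LY L)) * zsgn (w (LY L)) = -1 := by
    revert hvw
    generalize v (LY L) = a
    generalize w (LY L) = b
    intro hab
    fin_cases a <;> fin_cases b
    · exact absurd rfl hab
    · norm_num [zsgn]
    · norm_num [zsgn]
    · exact absurd rfl hab
  have hneg : NormedSpace.exp M v w = -NormedSpace.exp M v w := by
    calc NormedSpace.exp M v w
        = zsgn (v (LY L)) * NormedSpace.exp M v w * zsgn (w (LY L)) := hq'
      _ = (zsgn (v (LY L)) * zsgn (w (LY L))) * NormedSpace.exp M v w := by ring
      _ = -NormedSpace.exp M v w := by rw [hzz]; ring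
  have := add_eq_zero_iff_eq_neg.mpr hneg
  have h2 : (2 : ℂ) * NormedSpace.exp M v w = 0 := by rw [two_mul]; exact this
  exact (mul_eq_zero.mp h2).resolve_left two_ne_zero

lemma Φ_symm_apply (N : Matrix (Xs L × Ys L) (Xs L × Ys L) ℂ)
    (v w : Fin (K + 1) → Fin 2) :
    (Φ L).symm N v w = N ((gE L).symm v) ((gE L).symm w) := rfl

/-- The spin-flip on the left factor. -/
def shiftE (L : Fin (K + 1)) (c : Fin 2) : Xs L ≃ Xs L where
  toFun u := fun j => u j + c
  invFun u := fun j => u j + c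
  left_inv u := funext fun j => fin2_add_add _ _
  right_inv u := funext fun j => fin2_add_add _ _

lemma traceOut_kron (P : Matrix (Xs L) (Xs L) ℂ) (Q : Matrix (Ys L) (Ys L) ℂ)
    (hQ : ∀ v w : Ys L, v (LY L) ≠ w (LY L) → Q v w = 0) :
    traceOut (fun i : Fin (K + 1) => i < L) ((Φ L).symm (P ⊗ₖ Q)) =
      Matrix.trace P • Q := by
  ext v w
  rw [Matrix.smul_apply, traceOut]
  have key : ∀ u : Xs L,
      (Φ L).symm (P ⊗ₖ Q) (fun i => if h : i < L then u ⟨i, h⟩ else v ⟨i, h⟩)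
        (fun i => if h : i < L then u ⟨i, h⟩ else w ⟨i, h⟩) =
      P (fun j => u j + v (LY L)) (fun j => u j + w (LY L)) * Q v w := by
    intro u
    rw [Φ_symm_apply]
    have hv : (gE L).symm (fun i => if h : i < L then u ⟨i, h⟩ else v ⟨i, h⟩) =
        ((fun j => u j + v (LY L)), v) := by
      refine Prod.ext (funext fun j => ?_) (funext fun j => ?_)
      · show (if h : (j : Fin (K + 1)) < L then u ⟨j, h⟩ else v ⟨j, h⟩) +
          (if h : (L : Fin (K + 1)) < L then u ⟨L, h⟩ else v ⟨L, h⟩) = u j + v (LY L)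
        rw [dif_pos j.2, dif_neg (lt_irrefl L), Subtype.eta]
        rfl
      · show (if h : (j : Fin (K + 1)) < L then u ⟨j, h⟩ else v ⟨j, h⟩) = v j
        rw [dif_neg j.2, Subtype.eta]
    have hw : (gE L).symm (fun i => if h : i < L then u ⟨i, h⟩ else w ⟨i, h⟩) =
        ((fun j => u j + w (LY L)), w) := by
      refine Prod.ext (funext fun j => ?_) (funext fun j => ?_)
      · show (if h : (j : Fin (K + 1)) < L then u ⟨j, h⟩ else w ⟨j, h⟩) +
          (if h : (L : Fin (K + 1)) < L then u ⟨L, h⟩ else w ⟨L, h⟩) = u j + w (LY L)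
        rw [dif_pos j.2, dif_neg (lt_irrefl L), Subtype.eta]
        rfl
      · show (if h : (j : Fin (K + 1)) < L then u ⟨j, h⟩ else w ⟨j, h⟩) = w j
        rw [dif_neg j.2, Subtype.eta]
    rw [hv, hw, Matrix.kronecker_apply]
  rw [Finset.sum_congr rfl fun u _ => key u]
  by_cases hvw : v (LY L) = w (LY L)
  · rw [← Finset.sum_mul]
    congr 1
    rw [hvw]
    rw [show ∑ u : Xs L, P (fun j => u j + w (LY L)) (fun j => u j + w (LY L))
        = ∑ u : Xs L, P (shiftE L (w (LY L)) u) (shiftE L (w (LY L)) u) from rfl]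
    rw [Equiv.sum_comp (shiftE L (w (LY L))) (fun z => P z z)]
    rfl
  · rw [hQ v w hvw]
    simp

lemma trace_exp_hermitian_ne_zero {n : Type} [Fintype n] [DecidableEq n] [Nonempty n]
    {M : Matrix n n ℂ} (hM : M.IsHermitian) :
    Matrix.trace (NormedSpace.exp M) ≠ 0 := by
  have hhalf : ((1 / 2 : ℂ) • M).IsHermitian := by
    unfold Matrix.IsHermitian at hM ⊢
    rw [Matrix.conjTranspose_smul, hM]
    norm_num
  set C := NormedSpace.exp ((1 / 2 : ℂ) • M) with hC
  have hsplit : NormedSpace.exp M = C * C := by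
    rw [hC, ← Matrix.exp_add_of_commute _ _ (Commute.refl _), ← add_smul]
    norm_num
  have hCherm : C.IsHermitian := hhalf.exp
  have hCunit : IsUnit C := Matrix.isUnit_exp _
  have hCne : C ≠ 0 := by
    intro hC0
    obtain ⟨u, hu⟩ := hCunit
    have h1 : (1 : Matrix n n ℂ) = C * (↑u⁻¹ : Matrix n n ℂ) := by
      rw [← hu, Units.mul_inv]
    rw [hC0, zero_mul] at h1
    have := congrFun (congrFun h1 (Classical.arbitrary n)) (Classical.arbitrary n)
    rw [Matrix.one_apply_eq] at this
    exact one_ne_zero (this.trans rfl)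
  have htr : Matrix.trace (C * C) =
      ((∑ i : n, ∑ j : n, Complex.normSq (C i j) : ℝ) : ℂ) := by
    rw [Matrix.trace]
    push_cast
    refine Finset.sum_congr rfl fun i _ => ?_
    rw [Matrix.diag_apply, Matrix.mul_apply]
    refine Finset.sum_congr rfl fun j _ => ?_
    have : C j i = star (C i j) := by
      conv_lhs => rw [← hCherm]
      rfl
    rw [this, Complex.star_def, Complex.mul_conj]
  have hpos : 0 < ∑ i : n, ∑ j : n, Complex.normSq (C i j) := by
    obtain ⟨i, j, hij⟩ : ∃ i j, C i j ≠ 0 := by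
      by_contra hc
      push_neg at hc
      exact hCne (by ext i j; simpa using hc i j)
    refine Finset.sum_pos' (fun i _ => Finset.sum_nonneg fun j _ => Complex.normSq_nonneg _)
      ⟨i, Finset.mem_univ i, ?_⟩
    refine Finset.sum_pos' (fun j _ => Complex.normSq_nonneg _)
      ⟨j, Finset.mem_univ j, ?_⟩
    exact Complex.normSq_pos.mpr hij
  rw [hsplit, htr]
  exact_mod_cast Complex.ofReal_ne_zero.mpr (ne_of_gt hpos)

lemma leftH_hermitian (β : ℝ) : ((-(β : ℂ)) • leftH J h L).IsHermitian := by
  have hβ : star (-(β : ℂ)) = -(β : ℂ) := by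
    rw [star_neg, Complex.star_def, Complex.conj_ofReal]
  have hJc : ∀ r : ℝ, star ((r : ℝ) : ℂ) = ((r : ℝ) : ℂ) := fun r => by
    rw [Complex.star_def, Complex.conj_ofReal]
  have hZ : ∀ j : XI L, (pauliAt j σz)ᴴ = pauliAt j σz := fun j => by
    rw [pauliAt_conjTranspose, σz_conjT]
  have hX : ∀ j : XI L, (pauliAt j σx)ᴴ = pauliAt j σx := fun j => by
    rw [pauliAt_conjTranspose, σx_conjT]
  have hS1 : ∀ i : Fin K, (S1 J L i)ᴴ = S1 J L i := by
    intro i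
    unfold S1
    by_cases hs : (i.succ : Fin (K + 1)) < L
    · have hne : (⟨i.succ, hs⟩ : XI L) ≠ ⟨i.castSucc, (i.castSucc_lt_succ).trans hs⟩ :=
        fun e => absurd (congrArg Subtype.val e) (ne_of_gt (i.castSucc_lt_succ))
      rw [dif_pos hs, Matrix.conjTranspose_smul, Matrix.conjTranspose_mul, hZ, hZ, hJc,
        pauliAt_comm hne σz σz]
    · by_cases hc : (i.castSucc : Fin (K + 1)) < L
      · rw [dif_neg hs, dif_pos hc, Matrix.conjTranspose_smul, hZ, hJc]
      · rw [dif_neg hs, dif_neg hc, Matrix.conjTranspose_zero]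
  have hS2 : ∀ j : Fin (K + 1), (S2 h L j)ᴴ = S2 h L j := by
    intro j
    unfold S2
    by_cases hj : j < L
    · rw [dif_pos hj, Matrix.conjTranspose_smul, hX, hJc]
    · rw [dif_neg hj, Matrix.conjTranspose_zero]
  show _ᴴ = _
  rw [Matrix.conjTranspose_smul, hβ]
  congr 1
  unfold leftH
  rw [Matrix.conjTranspose_sub, Matrix.conjTranspose_neg, Matrix.conjTranspose_sum,
    Matrix.conjTranspose_sum, Finset.sum_congr rfl fun i _ => hS1 i,
    Finset.sum_congr rfl fun j _ => hS2 j]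

lemma trace_Φ_symm (N : Matrix (Xs L × Ys L) (Xs L × Ys L) ℂ) :
    Matrix.trace ((Φ L).symm N) = Matrix.trace N := by
  rw [Matrix.trace, Matrix.trace]
  exact Equiv.sum_comp ((gE L).symm) (fun p => N p p)

end Chain

end Shielding

theorem shielding_ising_chain (K : ℕ) (J : Fin K → ℝ) (h : Fin (K + 1) → ℝ) (β : ℝ)
    (L : Fin (K + 1)) (hL0 : 0 < L) (hLtop : L < Fin.last K) (hfield : h L = 0) :
    (Matrix.trace (NormedSpace.exp ((-(β : ℂ)) • chainH K J h)))⁻¹ •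
        traceOut (fun i : Fin (K + 1) => i < L)
          (NormedSpace.exp ((-(β : ℂ)) • chainH K J h)) =
      (Matrix.trace (NormedSpace.exp ((-(β : ℂ)) • chainHright K J h L)))⁻¹ •
        NormedSpace.exp ((-(β : ℂ)) • chainHright K J h L) := by
  classical
  set P := NormedSpace.exp ((-(β : ℂ)) • Shielding.leftH J h L) with hPdef
  set Q := NormedSpace.exp ((-(β : ℂ)) • chainHright K J h L) with hQdef
  have hfac := Shielding.exp_factor J h L β hL0 hfield
  have hQsec : ∀ v w, v (Shielding.LY L) ≠ w (Shielding.LY L) → Q v w = 0 :=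
    fun v w hvw => Shielding.sector_vanish J h L β hLtop v w hvw
  have htr : Matrix.trace (NormedSpace.exp ((-(β : ℂ)) • chainH K J h)) =
      Matrix.trace P * Matrix.trace Q := by
    rw [hfac, Shielding.trace_Φ_symm, Matrix.trace_kronecker]
  have hto : traceOut (fun i : Fin (K + 1) => i < L)
      (NormedSpace.exp ((-(β : ℂ)) • chainH K J h)) = Matrix.trace P • Q := by
    rw [hfac]
    exact Shielding.traceOut_kron L P Q hQsec
  have hP : Matrix.trace P ≠ 0 :=
    Shielding.trace_exp_hermitian_ne_zero (Shielding.leftH_hermitian J h L β)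
  rw [htr, hto, smul_smul]
  congr 1
  rw [mul_inv, mul_right_comm, inv_mul_cancel₀ hP, one_mul]
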